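/- With C := Ker(I − V U⁽¹⁾₂₂ V* U⁽²⁾₁₁), the matrix I − V U⁽¹⁾₂₂ V* U⁽²⁾₁₁ maps the orthogonal complement C^⊥ bijectively onto itself. -/

import Mathlib

open Matrix

variable {a b c p : ℕ}

lemma toEL_mul (A : Matrix (Fin a) (Fin b) ℂ) (B : Matrix (Fin b) (Fin c) ℂ)
    (x : EuclideanSpace ℂ (Fin c)) :
    Matrix.toEuclideanLin (A * B) x = Matrix.toEuclideanLin A (Matrix.toEuclideanLin B x) := by
  simp [Matrix.toEuclideanLin_apply, Matrix.mulVec_mulVec]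

lemma contract (A : Matrix (Fin p) (Fin p) ℂ) (E : Matrix (Fin a) (Fin p) ℂ)
    (h : Aᴴ * A + Eᴴ * E = 1) (x : EuclideanSpace ℂ (Fin p)) :
    ‖Matrix.toEuclideanLin A x‖ ≤ ‖x‖ := by
  have key : (inner ℂ (Matrix.toEuclideanLin A x) (Matrix.toEuclideanLin A x) : ℂ)
      + inner ℂ (Matrix.toEuclideanLin E x) (Matrix.toEuclideanLin E x) = inner ℂ x x := by
    have hA : (inner ℂ (Matrix.toEuclideanLin A x) (Matrix.toEuclideanLin A x) : ℂ)
        = inner ℂ (Matrix.toEuclideanLin (Aᴴ * A) x) x := by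
      rw [toEL_mul, Matrix.toEuclideanLin_conjTranspose_eq_adjoint, LinearMap.adjoint_inner_left]
    have hE : (inner ℂ (Matrix.toEuclideanLin E x) (Matrix.toEuclideanLin E x) : ℂ)
        = inner ℂ (Matrix.toEuclideanLin (Eᴴ * E) x) x := by
      rw [toEL_mul, Matrix.toEuclideanLin_conjTranspose_eq_adjoint, LinearMap.adjoint_inner_left]
    rw [hA, hE, ← inner_add_left]
    have hadd : (Matrix.toEuclideanLin (Aᴴ * A)) x + (Matrix.toEuclideanLin (Eᴴ * E)) x
        = (Matrix.toEuclideanLin (Aᴴ * A + Eᴴ * E)) x := by rw [map_add]; rfl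
    rw [hadd, h]
    simp [Matrix.toEuclideanLin_apply]
  have key' : ‖Matrix.toEuclideanLin A x‖ ^ 2 + ‖Matrix.toEuclideanLin E x‖ ^ 2 = ‖x‖ ^ 2 := by
    rw [inner_self_eq_norm_sq_to_K, inner_self_eq_norm_sq_to_K,
      inner_self_eq_norm_sq_to_K] at key
    exact_mod_cast key
  nlinarith [norm_nonneg (Matrix.toEuclideanLin A x), norm_nonneg x,
    sq_nonneg ‖Matrix.toEuclideanLin E x‖]

lemma adjoint_contract {T : EuclideanSpace ℂ (Fin p) →ₗ[ℂ] EuclideanSpace ℂ (Fin p)}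
    (h : ∀ x, ‖T x‖ ≤ ‖x‖) (x : EuclideanSpace ℂ (Fin p)) :
    ‖LinearMap.adjoint T x‖ ≤ ‖x‖ := by
  set y := LinearMap.adjoint T x with hy
  have h1 : ‖y‖ ^ 2 ≤ ‖x‖ * ‖y‖ := by
    have h2 : (inner ℂ y y : ℂ) = inner ℂ x (T y) := by
      rw [hy, LinearMap.adjoint_inner_left]
    have h3 : ‖y‖ ^ 2 = Complex.re (inner ℂ x (T y) : ℂ) := by
      rw [← h2, inner_self_eq_norm_sq_to_K]; norm_cast
    calc ‖y‖ ^ 2 = Complex.re (inner ℂ x (T y) : ℂ) := h3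
      _ ≤ ‖(inner ℂ x (T y) : ℂ)‖ := Complex.re_le_norm _
      _ ≤ ‖x‖ * ‖T y‖ := norm_inner_le_norm _ _
      _ ≤ ‖x‖ * ‖y‖ := by
          exact mul_le_mul_of_nonneg_left (h y) (norm_nonneg x)
  rcases eq_or_lt_of_le (norm_nonneg y) with h0 | h0
  · rw [← h0]; exact norm_nonneg x
  · nlinarith

lemma fix_adjoint {T : EuclideanSpace ℂ (Fin p) →ₗ[ℂ] EuclideanSpace ℂ (Fin p)}
    (h : ∀ x, ‖T x‖ ≤ ‖x‖) {x : EuclideanSpace ℂ (Fin p)} (hx : T x = x) :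
    LinearMap.adjoint T x = x := by
  have hsub : ‖LinearMap.adjoint T x - x‖ ^ 2 ≤ 0 := by
    have hns := norm_sub_sq (𝕜 := ℂ) (LinearMap.adjoint T x) x
    have hinner : RCLike.re (inner ℂ (LinearMap.adjoint T x) x : ℂ) = ‖x‖ ^ 2 := by
      rw [LinearMap.adjoint_inner_left, hx]; exact inner_self_eq_norm_sq x
    rw [hns, hinner]
    have := adjoint_contract h x
    nlinarith [norm_nonneg (LinearMap.adjoint T x), norm_nonneg x]
  have : ‖LinearMap.adjoint T x - x‖ = 0 := by nlinarith [norm_nonneg (LinearMap.adjoint T x - x)]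
  have := norm_eq_zero.mp this
  exact sub_eq_zero.mp this

set_option maxHeartbeats 1000000 in
/-- Lemma 3.6 (i): the matrix `I − V U⁽¹⁾₂₂ V* U⁽²⁾₁₁` maps the orthogonal complement of
`𝒞 = Ker(I − V U⁽¹⁾₂₂ V* U⁽²⁾₁₁)` bijectively onto itself. -/
theorem corner_product_bijective_on_orthogonal_complement
    {m₁ m₂ p : ℕ}
    (A₁₁ : Matrix (Fin m₁) (Fin m₁) ℂ) (A₁₂ : Matrix (Fin m₁) (Fin p) ℂ)
    (A₂₁ : Matrix (Fin p) (Fin m₁) ℂ) (A₂₂ : Matrix (Fin p) (Fin p) ℂ)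
    (B₁₁ : Matrix (Fin p) (Fin p) ℂ) (B₁₂ : Matrix (Fin p) (Fin m₂) ℂ)
    (B₂₁ : Matrix (Fin m₂) (Fin p) ℂ) (B₂₂ : Matrix (Fin m₂) (Fin m₂) ℂ)
    (hU1 : fromBlocks A₁₁ A₁₂ A₂₁ A₂₂ ∈ Matrix.unitaryGroup (Fin m₁ ⊕ Fin p) ℂ)
    (hU2 : fromBlocks B₁₁ B₁₂ B₂₁ B₂₂ ∈ Matrix.unitaryGroup (Fin p ⊕ Fin m₂) ℂ)
    (V : Matrix (Fin p) (Fin p) ℂ) (hV : V ∈ Matrix.unitaryGroup (Fin p) ℂ) :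
    Set.BijOn (⇑(Matrix.toEuclideanLin (1 - V * A₂₂ * Vᴴ * B₁₁)))
      ((LinearMap.ker (Matrix.toEuclideanLin (1 - V * A₂₂ * Vᴴ * B₁₁)))ᗮ : Set (EuclideanSpace ℂ (Fin p)))
      ((LinearMap.ker (Matrix.toEuclideanLin (1 - V * A₂₂ * Vᴴ * B₁₁)))ᗮ : Set (EuclideanSpace ℂ (Fin p))) := by
  -- block identities
  have h1 : (fromBlocks A₁₁ A₁₂ A₂₁ A₂₂)ᴴ * fromBlocks A₁₁ A₁₂ A₂₁ A₂₂ = 1 := by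
    simpa [Matrix.star_eq_conjTranspose] using hU1.1
  rw [Matrix.fromBlocks_conjTranspose, Matrix.fromBlocks_multiply, ← Matrix.fromBlocks_one] at h1
  have hA : A₂₂ᴴ * A₂₂ + A₁₂ᴴ * A₁₂ = 1 := by
    have h3 := congrArg Matrix.toBlocks₂₂ h1
    rw [Matrix.toBlocks_fromBlocks₂₂, Matrix.toBlocks_fromBlocks₂₂] at h3
    rw [add_comm]; exact h3
  have h2 : (fromBlocks B₁₁ B₁₂ B₂₁ B₂₂)ᴴ * fromBlocks B₁₁ B₁₂ B₂₁ B₂₂ = 1 := by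
    simpa [Matrix.star_eq_conjTranspose] using hU2.1
  rw [Matrix.fromBlocks_conjTranspose, Matrix.fromBlocks_multiply, ← Matrix.fromBlocks_one] at h2
  have hB : B₁₁ᴴ * B₁₁ + B₂₁ᴴ * B₂₁ = 1 := by
    have h3 := congrArg Matrix.toBlocks₁₁ h2
    rw [Matrix.toBlocks_fromBlocks₁₁, Matrix.toBlocks_fromBlocks₁₁] at h3
    exact h3
  have hV1 : Vᴴ * V = 1 := by simpa [Matrix.star_eq_conjTranspose] using hV.1
  have hV2 : V * Vᴴ = 1 := by simpa [Matrix.star_eq_conjTranspose] using hV.2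
  -- contraction facts
  have cV : ∀ x, ‖Matrix.toEuclideanLin V x‖ ≤ ‖x‖ := fun x =>
    contract V (0 : Matrix (Fin p) (Fin p) ℂ) (by simpa using hV1) x
  have cVh : ∀ x, ‖Matrix.toEuclideanLin Vᴴ x‖ ≤ ‖x‖ := fun x =>
    contract Vᴴ (0 : Matrix (Fin p) (Fin p) ℂ) (by simpa using hV2) x
  have cA : ∀ x, ‖Matrix.toEuclideanLin A₂₂ x‖ ≤ ‖x‖ := fun x => contract A₂₂ A₁₂ hA x
  have cB : ∀ x, ‖Matrix.toEuclideanLin B₁₁ x‖ ≤ ‖x‖ := fun x => contract B₁₁ B₂₁ hB x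
  set M : Matrix (Fin p) (Fin p) ℂ := V * A₂₂ * Vᴴ * B₁₁ with hM
  have cM : ∀ x, ‖Matrix.toEuclideanLin M x‖ ≤ ‖x‖ := by
    intro x
    rw [hM, toEL_mul, toEL_mul, toEL_mul]
    exact le_trans (cV _) (le_trans (cA _) (le_trans (cVh _) (cB _)))
  have cMh : ∀ x, ‖Matrix.toEuclideanLin Mᴴ x‖ ≤ ‖x‖ := by
    intro x
    rw [Matrix.toEuclideanLin_conjTranspose_eq_adjoint]
    exact adjoint_contract cM x
  set T := Matrix.toEuclideanLin (1 - M) with hTdef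
  have hT : ∀ x, T x = x - Matrix.toEuclideanLin M x := by
    intro x
    rw [hTdef, map_sub, LinearMap.sub_apply]
    congr 1
    simp [Matrix.toEuclideanLin_apply]
  have hTadj : ∀ x, LinearMap.adjoint T x = x - Matrix.toEuclideanLin Mᴴ x := by
    intro x
    rw [hTdef, ← Matrix.toEuclideanLin_conjTranspose_eq_adjoint, conjTranspose_sub,
      conjTranspose_one, map_sub, LinearMap.sub_apply]
    congr 1
    simp [Matrix.toEuclideanLin_apply]
  have hMadj : LinearMap.adjoint (Matrix.toEuclideanLin Mᴴ) = Matrix.toEuclideanLin M := by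
    rw [← Matrix.toEuclideanLin_conjTranspose_eq_adjoint, conjTranspose_conjTranspose]
  have hker : LinearMap.ker (LinearMap.adjoint T) = LinearMap.ker T := by
    ext x
    simp only [LinearMap.mem_ker]
    constructor
    · intro hx
      rw [hTadj, sub_eq_zero] at hx
      have := fix_adjoint cMh hx.symm
      rw [hMadj] at this
      rw [hT x, this, sub_self]
    · intro hx
      rw [hT, sub_eq_zero] at hx
      have := fix_adjoint cM hx.symm
      rw [← Matrix.toEuclideanLin_conjTranspose_eq_adjoint] at this
      rw [hTadj x, this, sub_self]
  have hrange : LinearMap.range T = (LinearMap.ker T)ᗮ := by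
    have horth : LinearMap.ker (LinearMap.adjoint T) = (LinearMap.range T)ᗮ := by
      ext z
      simp only [LinearMap.mem_ker, Submodule.mem_orthogonal]
      constructor
      · rintro hz u ⟨w, rfl⟩
        rw [← LinearMap.adjoint_inner_right, hz, inner_zero_right]
      · intro hz
        have key := LinearMap.adjoint_inner_right T (LinearMap.adjoint T z) z
        have h0 : (inner ℂ (LinearMap.adjoint T z) (LinearMap.adjoint T z) : ℂ) = 0 := by
          rw [key]; exact hz _ ⟨_, rfl⟩
        exact inner_self_eq_zero.mp h0
    rw [hker] at horth
    rw [horth, Submodule.orthogonal_orthogonal]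
  refine ⟨?_, ?_, ?_⟩
  · intro x _
    show T x ∈ (LinearMap.ker T)ᗮ
    rw [← hrange]
    exact LinearMap.mem_range_self T x
  · intro x hx y hy hxy
    have hsub : x - y ∈ LinearMap.ker T := by
      rw [LinearMap.mem_ker, map_sub, sub_eq_zero]
      exact hxy
    have hsub2 : x - y ∈ (LinearMap.ker T)ᗮ := Submodule.sub_mem _ hx hy
    have h0 : (inner ℂ (x - y) (x - y) : ℂ) = 0 :=
      (Submodule.mem_orthogonal _ _).mp hsub2 (x - y) hsub
    have := inner_self_eq_zero.mp h0
    exact sub_eq_zero.mp this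
  · intro y hy
    have hy' : y ∈ LinearMap.range T := by rw [hrange]; exact hy
    obtain ⟨x, hx⟩ := hy'
    refine ⟨x - (Submodule.orthogonalProjectionOnto (LinearMap.ker T) x : EuclideanSpace ℂ (Fin p)),
      Submodule.sub_starProjection_mem_orthogonal (K := LinearMap.ker T) x, ?_⟩
    have hk : T ((Submodule.orthogonalProjectionOnto (LinearMap.ker T) x : EuclideanSpace ℂ (Fin p))) = 0 :=
      LinearMap.mem_ker.mp (Submodule.orthogonalProjectionOnto (LinearMap.ker T) x).2
    rw [map_sub, hk, sub_zero, hx]
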